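/- Let ℐ be a symmetric positive definite r×r matrix partitioned conformably with r = q₁ + q₂, let Z ∈ ℝ^r with blocks (Z₁, Z₂), let C = (ℐ^{−1})₂₂, and let Λ = ℝ^{q₁} × Λ₂ for an arbitrary nonempty set Λ₂ ⊆ ℝ^{q₂}. Then inf_{λ ∈ Λ} (λ − Z)ᵀ ℐ (λ − Z) = inf_{λ₂ ∈ Λ₂} (λ₂ − Z₂)ᵀ C^{−1} (λ₂ − Z₂). -/

import Mathlib

open Matrix

/-- For a symmetric positive definite matrix `ℐ` partitioned according to `r = q₁ + q₂`,
`Z ∈ ℝ^r`, `C = (ℐ⁻¹)₂₂` and `Λ = ℝ^{q₁} × Λ₂` with `Λ₂ ≠ ∅`,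
`inf_{λ ∈ Λ} (λ − Z)ᵀ ℐ (λ − Z) = inf_{λ₂ ∈ Λ₂} (λ₂ − Z₂)ᵀ C⁻¹ (λ₂ − Z₂)`. -/
theorem stmt2 {q₁ q₂ : ℕ}
    (I : Matrix (Fin q₁ ⊕ Fin q₂) (Fin q₁ ⊕ Fin q₂) ℝ)
    (hsymm : I.IsSymm) (hpd : I.PosDef)
    (Z : Fin q₁ ⊕ Fin q₂ → ℝ)
    (Λ₂ : Set (Fin q₂ → ℝ)) (hΛ₂ : Λ₂.Nonempty) :
    sInf {v : ℝ | ∃ l : Fin q₁ ⊕ Fin q₂ → ℝ, (fun i => l (Sum.inr i)) ∈ Λ₂ ∧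
        v = (l - Z) ⬝ᵥ I.mulVec (l - Z)} =
    sInf {v : ℝ | ∃ l₂ ∈ Λ₂,
        v = (l₂ - (fun i => Z (Sum.inr i))) ⬝ᵥ
              ((I⁻¹).toBlocks₂₂)⁻¹.mulVec (l₂ - (fun i => Z (Sum.inr i)))} := by
  classical
  set A := I.toBlocks₁₁ with hA_def
  set B := I.toBlocks₁₂ with hB_def
  set D := I.toBlocks₂₂ with hD_def
  have hI : I = fromBlocks A B Bᴴ D := by
    have h21 : I.toBlocks₂₁ = Bᴴ := by
      ext i j
      simp [hB_def, Matrix.toBlocks₂₁, Matrix.toBlocks₁₂, hsymm.apply]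
    rw [← fromBlocks_toBlocks I, h21]
  -- A is positive definite
  have hApd : A.PosDef := by
    apply Matrix.PosDef.of_dotProduct_mulVec_pos
    · ext i j
      simpa [hA_def, Matrix.toBlocks₁₁] using hsymm.apply (Sum.inl i) (Sum.inl j)
    · intro x hx
      have hv : (Sum.elim x (0 : Fin q₂ → ℝ)) ≠ 0 := by
        intro h
        apply hx
        funext i
        exact congrFun h (Sum.inl i)
      have := hpd.dotProduct_mulVec_pos hv
      simpa [hI, fromBlocks_mulVec, dotProduct, Fintype.sum_sum_type] using this
  haveI instA : Invertible A := hApd.isUnit.invertible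
  set S := D - Bᴴ * A⁻¹ * B with hS_def
  -- S is positive definite
  have hSherm : S.IsHermitian := by
    have := hI ▸ hpd.1
    exact (Matrix.IsHermitian.fromBlocks₁₁ B D hApd.1).mp this
  have hSpd : S.PosDef := by
    refine Matrix.PosDef.of_dotProduct_mulVec_pos hSherm fun x hx => ?_
    have hv : (Sum.elim (-((A⁻¹ * B) *ᵥ x)) x) ≠ 0 := by
      intro h
      apply hx
      funext i
      exact congrFun h (Sum.inr i)
    have h := hpd.dotProduct_mulVec_pos hv
    rw [hI, dotProduct_mulVec, schur_complement_eq₁₁ B D _ _ hApd.1] at h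
    simp only [star_trivial, neg_add_cancel, dotProduct_zero, zero_add] at h
    rwa [← dotProduct_mulVec] at h
  haveI instS : Invertible S := hSpd.isUnit.invertible
  -- identify the C⁻¹ with S
  have hC : ((I⁻¹).toBlocks₂₂)⁻¹ = S := by
    have hAinv : ⅟A = A⁻¹ := invOf_eq_nonsing_inv A
    haveI instS' : Invertible (D - Bᴴ * ⅟A * B) := by rw [hAinv]; exact instS
    haveI instI : Invertible (fromBlocks A B Bᴴ D) := fromBlocks₁₁Invertible A B Bᴴ D
    have h1 : (fromBlocks A B Bᴴ D)⁻¹ = ⅟(fromBlocks A B Bᴴ D) :=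
      (invOf_eq_nonsing_inv _).symm
    have hSS : D - Bᴴ * ⅟A * B = S := by rw [hAinv]
    have h2 : (I⁻¹).toBlocks₂₂ = S⁻¹ := by
      rw [hI, h1, invOf_fromBlocks₁₁_eq, toBlocks_fromBlocks₂₂, invOf_eq_nonsing_inv, hSS]
    rw [h2]
    exact Matrix.inv_inv_of_invertible S
  -- the key quadratic form decomposition
  have key : ∀ (x : Fin q₁ → ℝ) (y : Fin q₂ → ℝ),
      (Sum.elim x y) ⬝ᵥ I *ᵥ (Sum.elim x y) =
        (x + (A⁻¹ * B) *ᵥ y) ⬝ᵥ A *ᵥ (x + (A⁻¹ * B) *ᵥ y) + y ⬝ᵥ S *ᵥ y := by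
    intro x y
    have h := schur_complement_eq₁₁ B D x y hApd.1
    simp only [star_trivial] at h
    rw [hI, dotProduct_mulVec, h, ← dotProduct_mulVec, ← dotProduct_mulVec]
  set Z₂ : Fin q₂ → ℝ := fun i => Z (Sum.inr i) with hZ₂
  set L := {v : ℝ | ∃ l : Fin q₁ ⊕ Fin q₂ → ℝ, (fun i => l (Sum.inr i)) ∈ Λ₂ ∧
        v = (l - Z) ⬝ᵥ I.mulVec (l - Z)} with hL
  set R := {v : ℝ | ∃ l₂ ∈ Λ₂,
        v = (l₂ - Z₂) ⬝ᵥ ((I⁻¹).toBlocks₂₂)⁻¹.mulVec (l₂ - Z₂)} with hR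
  -- R ⊆ L
  have hRL : R ⊆ L := by
    rintro v ⟨l₂, hl₂, rfl⟩
    refine ⟨Sum.elim (fun i => Z (Sum.inl i) - ((A⁻¹ * B) *ᵥ (l₂ - Z₂)) i) l₂, by
      simpa using hl₂, ?_⟩
    have hdiff : (Sum.elim (fun i => Z (Sum.inl i) - ((A⁻¹ * B) *ᵥ (l₂ - Z₂)) i) l₂) - Z =
        Sum.elim (-((A⁻¹ * B) *ᵥ (l₂ - Z₂))) (l₂ - Z₂) := by
      funext i
      cases i <;> simp [hZ₂]
    rw [hdiff, key, hC]
    simp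
  -- every element of L dominates an element of R
  have hLR : ∀ v ∈ L, ∃ w ∈ R, w ≤ v := by
    rintro v ⟨l, hl, rfl⟩
    refine ⟨((fun i => l (Sum.inr i)) - Z₂) ⬝ᵥ ((I⁻¹).toBlocks₂₂)⁻¹.mulVec
      ((fun i => l (Sum.inr i)) - Z₂), ⟨_, hl, rfl⟩, ?_⟩
    have hdiff : l - Z = Sum.elim ((l - Z) ∘ Sum.inl) ((l - Z) ∘ Sum.inr) :=
      (Sum.elim_comp_inl_inr _).symm
    have h2 : (l - Z) ∘ Sum.inr = (fun i => l (Sum.inr i)) - Z₂ := by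
      funext i; simp [hZ₂]
    rw [hdiff, key, hC, ← h2]
    have hnn : 0 ≤ ((l - Z) ∘ Sum.inl + (A⁻¹ * B) *ᵥ ((l - Z) ∘ Sum.inr)) ⬝ᵥ
        A *ᵥ ((l - Z) ∘ Sum.inl + (A⁻¹ * B) *ᵥ ((l - Z) ∘ Sum.inr)) := by
      simpa using hApd.posSemidef.dotProduct_mulVec_nonneg ((l - Z) ∘ Sum.inl + (A⁻¹ * B) *ᵥ ((l - Z) ∘ Sum.inr))
    linarith
  -- nonemptiness and boundedness
  obtain ⟨l₂₀, hl₂₀⟩ := hΛ₂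
  have hRne : R.Nonempty := ⟨_, l₂₀, hl₂₀, rfl⟩
  have hLne : L.Nonempty := hRne.mono hRL |>.imp fun _ h => h
  have hLbdd : BddBelow L := by
    refine ⟨0, fun v hv => ?_⟩
    obtain ⟨l, _, rfl⟩ := hv
    simpa using hpd.posSemidef.dotProduct_mulVec_nonneg (l - Z)
  have hRbdd : BddBelow R := hLbdd.mono hRL
  refine le_antisymm (csInf_le_csInf hLbdd hRne hRL) ?_
  refine le_csInf hLne fun v hv => ?_
  obtain ⟨w, hwR, hwv⟩ := hLR v hv
  exact le_trans (csInf_le hRbdd hwR) hwv
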